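/- Let s(x,y) = (Σ_{i+j=N} b_{ij} x^i y^j, Σ_{i+j=N} c_{ij} x^i y^j) be a homogeneous degree-N vector field with s(x,y)·(x,y) = 0, and set v₂(x,y) = Σ_{i+j=N} (−b_{ij} x^{i+1}(1−y)^i y^j + c_{ij} x^i (1−y)^i y^j). Then v₂ = Σ_{i+j=N} c_{ij} x^i (1−y)^{i−1} y^j, which is a polynomial of degree at most N in x and at most N−1 in y. -/

import Mathlib

open Finset MvPolynomial

/-- Let `s(x,y) = (Σ_{i+j=N} b_{ij} x^i y^j, Σ_{i+j=N} c_{ij} x^i y^j)` be a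
homogeneous degree-`N` vector field with `s(x,y)·(x,y) = 0`, and let
`v₂(x,y) = Σ_{i+j=N} (−b_{ij} x^{i+1}(1−y)^i y^j + c_{ij} x^i (1−y)^i y^j)`.
Then `v₂ = Σ_{i+j=N} c_{ij} x^i (1−y)^{i−1} y^j`, which is a polynomial of
degree at most `N` in `x` and at most `N−1` in `y`. -/
theorem nedelec_second_component (N : ℕ) (b c : ℕ → ℕ → ℝ) (v₂ : ℝ → ℝ → ℝ)
    (htan : ∀ x y : ℝ,
      x * (∑ i ∈ Finset.range (N + 1), b i (N - i) * x ^ i * y ^ (N - i))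
        + y * (∑ i ∈ Finset.range (N + 1), c i (N - i) * x ^ i * y ^ (N - i))
        = 0)
    (hv₂ : ∀ x y : ℝ,
      v₂ x y = ∑ i ∈ Finset.range (N + 1),
        (-(b i (N - i)) * x ^ (i + 1) * (1 - y) ^ i * y ^ (N - i)
          + c i (N - i) * x ^ i * (1 - y) ^ i * y ^ (N - i))) :
    (∀ x y : ℝ,
      v₂ x y = ∑ i ∈ Finset.range (N + 1),
        c i (N - i) * x ^ i * (1 - y) ^ (i - 1) * y ^ (N - i)) ∧
    ∃ q : MvPolynomial (Fin 2) ℝ,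
      q.degreeOf 0 ≤ N ∧ q.degreeOf 1 ≤ N - 1 ∧
      ∀ x y : ℝ, v₂ x y = MvPolynomial.eval ![x, y] q := by
  -- c₀ = 0
  have hc0 : c 0 N = 0 := by
    have h := htan 0 1
    have hs : ∑ i ∈ Finset.range (N + 1), c i (N - i) * (0:ℝ) ^ i * (1:ℝ) ^ (N - i)
        = c 0 N := by
      rw [Finset.sum_eq_single 0]
      · simp
      · intro i _ hne
        simp [zero_pow hne]
      · intro h0
        exact absurd (Finset.mem_range.2 (Nat.succ_pos N)) h0
    rw [hs] at h
    simpa using h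
  -- main pointwise identity
  have main : ∀ x y : ℝ,
      (∑ i ∈ Finset.range (N + 1),
        (-(b i (N - i)) * x ^ (i + 1) * (1 - y) ^ i * y ^ (N - i)
          + c i (N - i) * x ^ i * (1 - y) ^ i * y ^ (N - i)))
      = ∑ i ∈ Finset.range (N + 1),
        c i (N - i) * x ^ i * (1 - y) ^ (i - 1) * y ^ (N - i) := by
    intro x
    have hF : Continuous (fun y : ℝ => ∑ i ∈ Finset.range (N + 1),
        (-(b i (N - i)) * x ^ (i + 1) * (1 - y) ^ i * y ^ (N - i)
          + c i (N - i) * x ^ i * (1 - y) ^ i * y ^ (N - i))) := by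
      apply continuous_finset_sum
      intro i _
      fun_prop
    have hG : Continuous (fun y : ℝ => ∑ i ∈ Finset.range (N + 1),
        c i (N - i) * x ^ i * (1 - y) ^ (i - 1) * y ^ (N - i)) := by
      apply continuous_finset_sum
      intro i _
      fun_prop
    have heq : Set.EqOn
        (fun y : ℝ => ∑ i ∈ Finset.range (N + 1),
          (-(b i (N - i)) * x ^ (i + 1) * (1 - y) ^ i * y ^ (N - i)
            + c i (N - i) * x ^ i * (1 - y) ^ i * y ^ (N - i)))
        (fun y : ℝ => ∑ i ∈ Finset.range (N + 1),
          c i (N - i) * x ^ i * (1 - y) ^ (i - 1) * y ^ (N - i))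
        ({1}ᶜ : Set ℝ) := by
      intro y hy
      have hy1 : (1:ℝ) - y ≠ 0 := sub_ne_zero.mpr (Ne.symm hy)
      simp only
      apply mul_left_cancel₀ hy1
      -- RHS times (1-y)
      have hR : (1 - y) * (∑ i ∈ Finset.range (N + 1),
            c i (N - i) * x ^ i * (1 - y) ^ (i - 1) * y ^ (N - i))
          = ∑ i ∈ Finset.range (N + 1),
            c i (N - i) * x ^ i * (1 - y) ^ i * y ^ (N - i) := by
        rw [Finset.mul_sum]
        refine Finset.sum_congr rfl fun i _ => ?_
        match i with
        | 0 => simp [hc0]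
        | k + 1 =>
          simp only [Nat.add_sub_cancel]
          ring
      rw [hR]
      -- the tangency relation at (x(1-y), y)
      have key : (∑ i ∈ Finset.range (N + 1),
            b i (N - i) * x ^ (i + 1) * (1 - y) ^ (i + 1) * y ^ (N - i))
          + (∑ i ∈ Finset.range (N + 1),
            c i (N - i) * x ^ i * (1 - y) ^ i * y ^ (N - i + 1)) = 0 := by
        have h := htan (x * (1 - y)) y
        calc (∑ i ∈ Finset.range (N + 1),
              b i (N - i) * x ^ (i + 1) * (1 - y) ^ (i + 1) * y ^ (N - i))
            + (∑ i ∈ Finset.range (N + 1),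
              c i (N - i) * x ^ i * (1 - y) ^ i * y ^ (N - i + 1))
            = x * (1 - y) * (∑ i ∈ Finset.range (N + 1),
                b i (N - i) * (x * (1 - y)) ^ i * y ^ (N - i))
              + y * (∑ i ∈ Finset.range (N + 1),
                c i (N - i) * (x * (1 - y)) ^ i * y ^ (N - i)) := by
              rw [Finset.mul_sum, Finset.mul_sum]
              congr 1 <;>
                (refine Finset.sum_congr rfl fun i _ => ?_; rw [mul_pow]; ring)
          _ = 0 := h
      -- expand LHS times (1-y)
      rw [Finset.mul_sum]
      have hL : ∀ i ∈ Finset.range (N + 1),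
          (1 - y) * (-(b i (N - i)) * x ^ (i + 1) * (1 - y) ^ i * y ^ (N - i)
            + c i (N - i) * x ^ i * (1 - y) ^ i * y ^ (N - i))
          = (-(b i (N - i) * x ^ (i + 1) * (1 - y) ^ (i + 1) * y ^ (N - i))
              + -(c i (N - i) * x ^ i * (1 - y) ^ i * y ^ (N - i + 1)))
            + (c i (N - i) * x ^ i * (1 - y) ^ i * y ^ (N - i + 1)
              + c i (N - i) * x ^ i * (1 - y) ^ (i + 1) * y ^ (N - i)) := by
        intro i _
        ring
      rw [Finset.sum_congr rfl hL, Finset.sum_add_distrib, Finset.sum_add_distrib,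
        Finset.sum_neg_distrib, Finset.sum_neg_distrib]
      have hcomb : ∑ i ∈ Finset.range (N + 1),
          (c i (N - i) * x ^ i * (1 - y) ^ i * y ^ (N - i + 1)
            + c i (N - i) * x ^ i * (1 - y) ^ (i + 1) * y ^ (N - i))
          = ∑ i ∈ Finset.range (N + 1),
            c i (N - i) * x ^ i * (1 - y) ^ i * y ^ (N - i) := by
        refine Finset.sum_congr rfl fun i _ => ?_
        ring
      rw [hcomb]
      have := key
      linarith [key]
    intro y
    have := Continuous.ext_on (dense_compl_singleton (1:ℝ)) hF hG heq
    exact congrFun this y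
  have part1 : ∀ x y : ℝ,
      v₂ x y = ∑ i ∈ Finset.range (N + 1),
        c i (N - i) * x ^ i * (1 - y) ^ (i - 1) * y ^ (N - i) := by
    intro x y
    rw [hv₂ x y, main x y]
  refine ⟨part1, ?_⟩
  -- the polynomial
  have hsub : ∀ j : Fin 2, degreeOf j ((1 : MvPolynomial (Fin 2) ℝ) - X 1)
      ≤ degreeOf j (X 1 : MvPolynomial (Fin 2) ℝ) := by
    intro j
    have h : ((1 : MvPolynomial (Fin 2) ℝ) - X 1) = 1 + C (-1) * X 1 := by
      rw [map_neg, C_1]; ring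
    rw [h]
    refine le_trans (degreeOf_add_le _ _ _) (max_le ?_ ?_)
    · rw [← C_1, degreeOf_C]
      exact Nat.zero_le _
    · refine le_trans (degreeOf_mul_le _ _ _) ?_
      rw [degreeOf_C, zero_add]
  have hterm : ∀ (j : Fin 2) (i : ℕ),
      degreeOf j (C (c i (N - i)) * X 0 ^ i * (1 - X 1) ^ (i - 1) * X 1 ^ (N - i)
        : MvPolynomial (Fin 2) ℝ)
      ≤ (i * degreeOf j (X 0 : MvPolynomial (Fin 2) ℝ)
          + (i - 1) * degreeOf j (X 1 : MvPolynomial (Fin 2) ℝ))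
        + (N - i) * degreeOf j (X 1 : MvPolynomial (Fin 2) ℝ) := by
    intro j i
    refine le_trans (degreeOf_mul_le _ _ _) (add_le_add ?_ (degreeOf_pow_le _ _ _))
    refine le_trans (degreeOf_mul_le _ _ _) (add_le_add ?_ ?_)
    · refine le_trans (degreeOf_mul_le _ _ _) ?_
      rw [degreeOf_C, zero_add]
      exact degreeOf_pow_le _ _ _
    · exact le_trans (degreeOf_pow_le _ _ _) (Nat.mul_le_mul_left _ (hsub j))
  have hX00 : degreeOf (0 : Fin 2) (X 0 : MvPolynomial (Fin 2) ℝ) = 1 := by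
    simp [degreeOf_X]
  have hX01 : degreeOf (0 : Fin 2) (X 1 : MvPolynomial (Fin 2) ℝ) = 0 := by
    simp [degreeOf_X]
  have hX10 : degreeOf (1 : Fin 2) (X 0 : MvPolynomial (Fin 2) ℝ) = 0 := by
    simp [degreeOf_X]
  have hX11 : degreeOf (1 : Fin 2) (X 1 : MvPolynomial (Fin 2) ℝ) = 1 := by
    simp [degreeOf_X]
  refine ⟨∑ i ∈ Finset.range (N + 1),
      (C (c i (N - i)) * X 0 ^ i * (1 - X 1) ^ (i - 1) * X 1 ^ (N - i)
        : MvPolynomial (Fin 2) ℝ), ?_, ?_, ?_⟩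
  · refine le_trans (degreeOf_sum_le _ _ _) ?_
    rw [Finset.sup_le_iff]
    intro i hi
    refine le_trans (hterm 0 i) ?_
    rw [hX00, hX01]
    have := Finset.mem_range.1 hi
    simp only [Nat.mul_zero, Nat.mul_one, Nat.add_zero]
    omega
  · refine le_trans (degreeOf_sum_le _ _ _) ?_
    rw [Finset.sup_le_iff]
    intro i hi
    obtain _ | k := i
    · simp [hc0]
    · refine le_trans (hterm 1 (k + 1)) ?_
      rw [hX10, hX11]
      have := Finset.mem_range.1 hi
      simp only [Nat.mul_zero, Nat.mul_one, Nat.zero_add, Nat.add_sub_cancel]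
      omega
  · intro x y
    rw [part1 x y]
    simp only [map_sum, eval_mul, eval_pow, eval_C, eval_X, eval_sub, map_one,
      Matrix.cons_val_zero, Matrix.cons_val_one, Matrix.head_cons]
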